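/- Let Ψ be a 2-form and ω a p-form on V. Then [Ψ, ω] = 2 Σ_{i=1}^q (e_i ⌟ Ψ) ∧ (e_i ⌟ ω). In particular, [Ψ, ω] is again a form of degree p. -/

import Mathlib

open scoped BigOperators

namespace Paper

noncomputable section

/-- Coefficients of exterior forms w.r.t. the fixed orthonormal basis `e₁,…,e_q` of `V = ℝ^q`:
a form is identified with its family of coefficients indexed by subsets of `Fin q`. -/
abbrev Ext (q : ℕ) := Finset (Fin q) → ℝ

variable {q : ℕ}

/-- `(-1)^{#{j ∈ s | j < i}}` -/
def sgn (i : Fin q) (s : Finset (Fin q)) : ℝ := (-1 : ℝ) ^ (s.filter fun j => j < i).card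

/-- Exterior multiplication by the basis vector `e_i`. -/
def wB (i : Fin q) (ω : Ext q) : Ext q := fun s =>
  if i ∈ s then sgn i (s.erase i) * ω (s.erase i) else 0

/-- Interior product (contraction) with the basis vector `e_i`. -/
def iB (i : Fin q) (ω : Ext q) : Ext q := fun s =>
  if i ∈ s then 0 else sgn i s * ω (insert i s)

/-- The basis monomial `e_{i₁} ∧ ⋯ ∧ e_{i_p}`, for `s = {i₁ < ⋯ < i_p}`. -/
def bF (s : Finset (Fin q)) : Ext q := fun t => if t = s then 1 else 0

/-- The basis vector `e_i` of `V = ℝ^q`. -/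
def eB (i : Fin q) : Fin q → ℝ := Pi.single i 1

/-- Exterior multiplication by the vector `X ∈ V`. -/
def wV (X : Fin q → ℝ) (ω : Ext q) : Ext q := ∑ i, X i • wB i ω

/-- Interior product with the vector `X ∈ V`. -/
def iV (X : Fin q → ℝ) (ω : Ext q) : Ext q := ∑ i, X i • iB i ω

/-- Clifford multiplication `X · ω = X ∧ ω − X ⌟ ω` of a vector with a form. -/
def clV (X : Fin q → ℝ) (ω : Ext q) : Ext q := wV X ω - iV X ω

/-- Clifford multiplication `e_{i₁} · e_{i₂} ⋯ e_{i_p} · ω` for `s = {i₁ < ⋯ < i_p}`. -/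
def clB (s : Finset (Fin q)) (ω : Ext q) : Ext q :=
  (Finset.sort s (· ≤ ·)).foldr (fun i τ => clV (eB i) τ) ω

/-- Clifford multiplication of two forms. -/
def clM (ω₁ ω₂ : Ext q) : Ext q := ∑ s : Finset (Fin q), ω₁ s • clB s ω₂

/-- The bracket `[ω₁, ω₂] = ω₁ · ω₂ − ω₂ · ω₁`. -/
def brkt (ω₁ ω₂ : Ext q) : Ext q := clM ω₁ ω₂ - clM ω₂ ω₁

/-- Exterior multiplication by the monomial `e_{i₁} ∧ ⋯ ∧ e_{i_p}`. -/
def wBs (s : Finset (Fin q)) (ω : Ext q) : Ext q :=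
  (Finset.sort s (· ≤ ·)).foldr (fun i τ => wB i τ) ω

/-- The wedge product of two forms. -/
def wM (ω₁ ω₂ : Ext q) : Ext q := ∑ s : Finset (Fin q), ω₁ s • wBs s ω₂

/-- The inner product on forms, for which the basis monomials are orthonormal. -/
def ip (ω φ : Ext q) : ℝ := ∑ s : Finset (Fin q), ω s * φ s

/-- `ω` is a form of (pure) degree `p`. -/
def homog (p : ℕ) (ω : Ext q) : Prop := ∀ s : Finset (Fin q), s.card ≠ p → ω s = 0

/-- The inner product of two vectors of `V = ℝ^q`. -/
def dotP (X Y : Fin q → ℝ) : ℝ := ∑ i, X i * Y i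

/-- A vector of `V` regarded as a 1-form. -/
def oneF (X : Fin q → ℝ) : Ext q := ∑ i, X i • bF {i}

/-- The wedge `X ∧ Y` of two vectors. -/
def w2 (X Y : Fin q → ℝ) : Ext q := wV X (oneF Y)

/-- Two-element subsets, indexing the canonical orthonormal basis of `Λ²V`. -/
def twoSets (q : ℕ) : Finset (Finset (Fin q)) := Finset.univ.filter fun s => s.card = 2

/-- The Bochner operator quadratic form `⟨B_R^{[p]} ω, φ⟩ =
(1/4) Σ_{r,s} ⟨R ψ_r, ψ_s⟩ ⟨[ψ_r,ω],[ψ_s,φ]⟩`, computed in the canonical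
orthonormal basis `{e_i ∧ e_j}_{i<j}` of `Λ²V`. -/
def Bform (R : Ext q →ₗ[ℝ] Ext q) (ω φ : Ext q) : ℝ :=
  (1 / 4 : ℝ) * ∑ s ∈ twoSets q, ∑ t ∈ twoSets q,
    ip (R (bF s)) (bF t) * ip (brkt (bF s) ω) (brkt (bF t) φ)

-- sgn lemmas
lemma sgn_insert (i l : Fin q) (s : Finset (Fin q)) (h : i ∉ s) :
    sgn l (insert i s) = (if i < l then -1 else 1) * sgn l s := by
  unfold sgn
  rw [Finset.filter_insert]
  split
  · rw [Finset.card_insert_of_notMem (by simp [h]), pow_succ]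
    ring
  · ring

lemma sgn_erase_of_mem (i l : Fin q) (s : Finset (Fin q)) (h : i ∈ s) :
    sgn l (s.erase i) = (if i < l then -1 else 1) * sgn l s := by
  have h2 := sgn_insert i l (s.erase i) (Finset.notMem_erase i s)
  rw [Finset.insert_erase h] at h2
  rw [h2]
  split <;> ring

lemma sgn_erase_self (i : Fin q) (s : Finset (Fin q)) :
    sgn i (s.erase i) = sgn i s := by
  by_cases h : i ∈ s
  · rw [sgn_erase_of_mem i i s h, if_neg (lt_irrefl i), one_mul]
  · rw [Finset.erase_eq_of_notMem h]

lemma sgn_sq (i : Fin q) (s : Finset (Fin q)) : sgn i s * sgn i s = 1 := by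
  unfold sgn
  rw [← pow_add]
  exact Even.neg_one_pow ⟨_, rfl⟩
-- linearity
lemma wB_add (i : Fin q) (ω φ : Ext q) : wB i (ω + φ) = wB i ω + wB i φ := by
  funext s; simp only [wB, Pi.add_apply]; split <;> ring

lemma wB_smul (i : Fin q) (c : ℝ) (ω : Ext q) : wB i (c • ω) = c • wB i ω := by
  funext s; simp only [wB, Pi.smul_apply, smul_eq_mul]; split <;> ring

lemma iB_add (i : Fin q) (ω φ : Ext q) : iB i (ω + φ) = iB i ω + iB i φ := by
  funext s; simp only [iB, Pi.add_apply]; split <;> ring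

lemma iB_smul (i : Fin q) (c : ℝ) (ω : Ext q) : iB i (c • ω) = c • iB i ω := by
  funext s; simp only [iB, Pi.smul_apply, smul_eq_mul]; split <;> ring

-- CAR relations
lemma wB_wB (i l : Fin q) (ω : Ext q) : wB i (wB l ω) = -(wB l (wB i ω)) := by
  rcases eq_or_ne i l with rfl | hne
  · funext s
    simp only [wB, Pi.neg_apply]
    split
    · rw [if_neg (Finset.notMem_erase i s)]; ring
    · ring
  · funext s
    simp only [wB, Pi.neg_apply]
    by_cases hi : i ∈ s <;> by_cases hl : l ∈ s
    · rw [if_pos hi, if_pos hl, if_pos (Finset.mem_erase.2 ⟨hne.symm, hl⟩),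
        if_pos (Finset.mem_erase.2 ⟨hne, hi⟩)]
      have e1 : sgn l ((s.erase i).erase l) = (if i < l then -1 else 1) * sgn l s := by
        rw [sgn_erase_self l (s.erase i), sgn_erase_of_mem i l s hi]
      have e2 : sgn i ((s.erase l).erase i) = (if l < i then -1 else 1) * sgn i s := by
        rw [sgn_erase_self i (s.erase l), sgn_erase_of_mem l i s hl]
      rw [e1, e2, sgn_erase_self i s, sgn_erase_self l s,
        Finset.erase_right_comm (a := i) (b := l)]
      rcases lt_or_gt_of_ne hne with h | h
      · rw [if_pos h, if_neg (asymm h)]; ring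
      · rw [if_neg (asymm h), if_pos h]; ring
    · rw [if_pos hi, if_neg hl, if_neg (fun hc => hl (Finset.mem_of_mem_erase hc))]; ring
    · rw [if_neg hi, if_pos hl, if_neg (fun hc => hi (Finset.mem_of_mem_erase hc))]; ring
    · rw [if_neg hi, if_neg hl]; ring

lemma iB_iB (i l : Fin q) (ω : Ext q) : iB i (iB l ω) = -(iB l (iB i ω)) := by
  rcases eq_or_ne i l with rfl | hne
  · funext s
    simp only [iB, Pi.neg_apply]
    split
    · ring
    · rw [if_pos (Finset.mem_insert_self i s)]; ring
  · funext s
    simp only [iB, Pi.neg_apply]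
    by_cases hi : i ∈ s <;> by_cases hl : l ∈ s
    · rw [if_pos hi, if_pos hl]; ring
    · rw [if_pos hi, if_neg hl, if_pos (Finset.mem_insert_of_mem hi)]; ring
    · rw [if_neg hi, if_pos hl, if_pos (Finset.mem_insert_of_mem hl)]; ring
    · rw [if_neg hi, if_neg hl,
        if_neg (by simp [hne.symm, hl]), if_neg (by simp [hne, hi]),
        sgn_insert l i s hl, sgn_insert i l s hi, Finset.insert_comm i l s]
      rcases lt_or_gt_of_ne hne with h | h
      · rw [if_pos h, if_neg (asymm h)]; ring
      · rw [if_neg (asymm h), if_pos h]; ring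

lemma wB_iB (i l : Fin q) (ω : Ext q) :
    wB i (iB l ω) + iB l (wB i ω) = if i = l then ω else 0 := by
  rcases eq_or_ne i l with rfl | hne
  · rw [if_pos rfl]
    funext s
    simp only [wB, iB, Pi.add_apply]
    by_cases hi : i ∈ s
    · rw [if_pos hi, if_pos hi, if_neg (Finset.notMem_erase i s),
        Finset.insert_erase hi, sgn_erase_self i s]
      have := sgn_sq i s; linear_combination ω s * this
    · rw [if_neg hi, if_neg hi, if_pos (Finset.mem_insert_self i s),
        Finset.erase_insert hi]
      have := sgn_sq i s; linear_combination ω s * this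
  · funext s
    simp only [wB, iB, Pi.add_apply, if_neg hne, Pi.zero_apply]
    by_cases hi : i ∈ s <;> by_cases hl : l ∈ s
    · rw [if_pos hi, if_pos hl, if_pos (Finset.mem_erase.2 ⟨hne.symm, hl⟩)]; ring
    · rw [if_pos hi, if_neg hl, if_neg (by simp [hne.symm, hl]),
        if_pos (Finset.mem_insert_of_mem hi),
        sgn_erase_self i s, sgn_erase_of_mem i l s hi,
        Finset.erase_insert_of_ne hne.symm,
        sgn_insert l i (s.erase i) (fun hc => hl (Finset.mem_of_mem_erase hc)),
        sgn_erase_self i s]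
      rcases lt_or_gt_of_ne hne with h | h
      · rw [if_pos h, if_neg (asymm h)]; ring
      · rw [if_neg (asymm h), if_pos h]; ring
    · rw [if_neg hi, if_pos hl]; ring
    · rw [if_neg hi, if_neg hl, if_neg (by simp [hne, hi])]; ring
/-- Grading involution. -/
def par (ω : Ext q) : Ext q := fun s => (-1 : ℝ) ^ s.card * ω s

lemma par_par (ω : Ext q) : par (par ω) = ω := by
  funext s
  simp only [par, ← mul_assoc, ← pow_add]
  rw [Even.neg_one_pow ⟨_, rfl⟩, one_mul]

lemma par_add (ω φ : Ext q) : par (ω + φ) = par ω + par φ := by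
  funext s; simp only [par, Pi.add_apply]; ring

lemma par_smul (c : ℝ) (ω : Ext q) : par (c • ω) = c • par ω := by
  funext s; simp only [par, Pi.smul_apply, smul_eq_mul]; ring

lemma par_wB (i : Fin q) (ω : Ext q) : par (wB i ω) = -(wB i (par ω)) := by
  funext s
  simp only [par, wB, Pi.neg_apply]
  by_cases hi : i ∈ s
  · rw [if_pos hi, if_pos hi, ← Finset.card_erase_add_one hi, pow_succ]
    ring
  · rw [if_neg hi, if_neg hi]; ring

lemma par_iB (i : Fin q) (ω : Ext q) : par (iB i ω) = -(iB i (par ω)) := by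
  funext s
  simp only [par, iB, Pi.neg_apply]
  by_cases hi : i ∈ s
  · rw [if_pos hi, if_pos hi]; ring
  · rw [if_neg hi, if_neg hi,
      Finset.card_insert_of_notMem hi, pow_succ]
    ring

/-- Right Clifford multiplication by the basis vector `e_i`. -/
def rB (i : Fin q) (ω : Ext q) : Ext q := wB i (par ω) + iB i (par ω)

lemma rB_add (i : Fin q) (ω φ : Ext q) : rB i (ω + φ) = rB i ω + rB i φ := by
  simp only [rB, par_add, wB_add, iB_add]; abel

lemma rB_smul (i : Fin q) (c : ℝ) (ω : Ext q) : rB i (c • ω) = c • rB i ω := by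
  simp only [rB, par_smul, wB_smul, iB_smul, smul_add]

/-- Left Clifford multiplication by `e_l` commutes with right multiplication by `e_i`. -/
lemma clVB_rB (l i : Fin q) (ω : Ext q) :
    wB l (rB i ω) - iB l (rB i ω) = rB i (wB l ω - iB l ω) := by
  have hσ : par (wB l ω - iB l ω) = -(wB l (par ω)) + iB l (par ω) := by
    have : wB l ω - iB l ω = wB l ω + (-1 : ℝ) • iB l ω := by
      funext s; simp [sub_eq_add_neg]
    rw [this, par_add, par_smul, par_wB, par_iB]
    funext s; simp
  set σ := par ω with hσdef
  have h1 : wB l (wB i σ) = -(wB i (wB l σ)) := wB_wB l i σ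
  have h2 : iB l (iB i σ) = -(iB i (iB l σ)) := iB_iB l i σ
  have h3 : wB l (iB i σ) + iB i (wB l σ) = if l = i then σ else 0 := wB_iB l i σ
  have h4 : wB i (iB l σ) + iB l (wB i σ) = if i = l then σ else 0 := wB_iB i l σ
  have h5 : (if l = i then σ else 0) = (if i = l then σ else 0) := by
    simp [eq_comm]
  rw [rB, rB, hσ, wB_add, iB_add, wB_add, iB_add]
  have hnw : wB i (-(wB l σ)) = -(wB i (wB l σ)) := by
    have := wB_smul i (-1 : ℝ) (wB l σ)
    simpa [neg_one_smul] using this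
  have hni : iB i (-(wB l σ)) = -(iB i (wB l σ)) := by
    have := iB_smul i (-1 : ℝ) (wB l σ)
    simpa [neg_one_smul] using this
  rw [hnw, hni]
  linear_combination (norm := (funext s; simp [hσdef]; ring_nf)) h1 + h3 - h4 - h2 + h5
lemma clV_eB (l : Fin q) (φ : Ext q) : clV (eB l) φ = wB l φ - iB l φ := by
  unfold clV wV iV eB
  have hw : (∑ m : Fin q, (Pi.single l 1 : Fin q → ℝ) m • wB m φ) = wB l φ := by
    rw [Finset.sum_eq_single l (fun b _ hb => by rw [Pi.single_eq_of_ne hb, zero_smul])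
      (fun h => absurd (Finset.mem_univ l) h), Pi.single_eq_same, one_smul]
  have hi : (∑ m : Fin q, (Pi.single l 1 : Fin q → ℝ) m • iB m φ) = iB l φ := by
    rw [Finset.sum_eq_single l (fun b _ hb => by rw [Pi.single_eq_of_ne hb, zero_smul])
      (fun h => absurd (Finset.mem_univ l) h), Pi.single_eq_same, one_smul]
  rw [hw, hi]

lemma clB_eq_foldr (t : Finset (Fin q)) (ω : Ext q) :
    clB t ω = (Finset.sort t (· ≤ ·)).foldr (fun i τ => wB i τ - iB i τ) ω := by
  unfold clB
  induction Finset.sort t (· ≤ ·) with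
  | nil => rfl
  | cons a L ih => simp only [List.foldr_cons, ih, clV_eB]

lemma clB_rB (t : Finset (Fin q)) (i : Fin q) (ω : Ext q) :
    clB t (rB i ω) = rB i (clB t ω) := by
  rw [clB_eq_foldr, clB_eq_foldr]
  induction Finset.sort t (· ≤ ·) with
  | nil => rfl
  | cons a L ih => simp only [List.foldr_cons, ih, clVB_rB]

-- action on basis monomials
lemma wB_bF (a : Fin q) (s : Finset (Fin q)) (ha : a ∉ s) :
    wB a (bF s) = sgn a s • bF (insert a s) := by
  funext u
  simp only [wB, bF, Pi.smul_apply, smul_eq_mul]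
  by_cases hu : a ∈ u
  · rw [if_pos hu]
    by_cases he : u.erase a = s
    · rw [if_pos he, if_pos (by rw [← he, Finset.insert_erase hu]), ← he,
        sgn_erase_self a u]
    · rw [if_neg he, if_neg (fun hc => he (by rw [hc, Finset.erase_insert ha]))]
      ring
  · rw [if_neg hu, if_neg (fun hc : u = insert a s => hu (hc ▸ Finset.mem_insert_self a s))]
    ring

lemma iB_bF_mem (a : Fin q) (s : Finset (Fin q)) (ha : a ∈ s) :
    iB a (bF s) = sgn a s • bF (s.erase a) := by
  funext u
  simp only [iB, bF, Pi.smul_apply, smul_eq_mul]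
  by_cases hu : a ∈ u
  · rw [if_pos hu, if_neg (fun hc : u = s.erase a => Finset.notMem_erase a s (hc ▸ hu))]
    ring
  · rw [if_neg hu]
    by_cases he : insert a u = s
    · rw [if_pos he, if_pos (by rw [← he, Finset.erase_insert hu]), ← he,
        sgn_insert a a u hu, if_neg (lt_irrefl a)]
      ring
    · rw [if_neg he, if_neg (fun hc => he (by rw [hc, Finset.insert_erase ha]))]
      ring

lemma iB_bF_not_mem (a : Fin q) (s : Finset (Fin q)) (ha : a ∉ s) :
    iB a (bF s) = 0 := by
  funext u
  simp only [iB, bF, Pi.zero_apply]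
  by_cases hu : a ∈ u
  · rw [if_pos hu]
  · rw [if_neg hu, if_neg (fun hc : insert a u = s => ha (hc ▸ Finset.mem_insert_self a u))]
    ring
lemma wB_sub (i : Fin q) (ω φ : Ext q) : wB i (ω - φ) = wB i ω - wB i φ := by
  funext s; simp only [wB, Pi.sub_apply]; split <;> ring

lemma iB_sub (i : Fin q) (ω φ : Ext q) : iB i (ω - φ) = iB i ω - iB i φ := by
  funext s; simp only [iB, Pi.sub_apply]; split <;> ring

lemma foldr_clVB_bF (L : List (Fin q)) (hL : L.Pairwise (· < ·)) :
    L.foldr (fun i τ => wB i τ - iB i τ) (bF (∅ : Finset (Fin q))) = bF L.toFinset := by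
  induction L with
  | nil => simp
  | cons a L ih =>
    have hs : L.Pairwise (· < ·) := hL.of_cons
    have hmem : a ∉ L.toFinset := by
      simp only [List.mem_toFinset]
      intro hc
      exact lt_irrefl a (List.rel_of_pairwise_cons hL hc)
    rw [List.foldr_cons, ih hs, wB_bF a _ hmem, iB_bF_not_mem a _ hmem]
    have hsgn : sgn a L.toFinset = 1 := by
      unfold sgn
      rw [Finset.filter_eq_empty_iff.2 ?_, Finset.card_empty, pow_zero]
      intro b hb
      simp only [List.mem_toFinset] at hb
      exact asymm (List.rel_of_pairwise_cons hL hb)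
    rw [hsgn, one_smul, sub_zero, List.toFinset_cons]

lemma clB_bF_empty (t : Finset (Fin q)) : clB t (bF ∅) = bF t := by
  rw [clB_eq_foldr, foldr_clVB_bF _ (Finset.sortedLT_sort t).pairwise, Finset.sort_toFinset]

lemma sum_bF (ω : Ext q) : (∑ t : Finset (Fin q), ω t • bF t) = ω := by
  funext s
  rw [Finset.sum_apply]
  simp only [Pi.smul_apply, bF, smul_eq_mul, mul_ite, mul_one, mul_zero]
  simp [Finset.sum_ite_eq]

lemma rB_sum {α : Type*} (i : Fin q) (u : Finset α) (f : α → Ext q) :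
    rB i (∑ a ∈ u, f a) = ∑ a ∈ u, rB i (f a) :=
  map_sum (AddMonoidHom.mk' (rB i) (rB_add i)) f u

lemma par_bF (s : Finset (Fin q)) : par (bF s) = ((-1 : ℝ) ^ s.card) • bF s := by
  funext u
  simp only [par, bF, Pi.smul_apply, smul_eq_mul]
  by_cases h : u = s
  · subst h; ring
  · rw [if_neg h]; ring

lemma sgn_empty (j : Fin q) : sgn j (∅ : Finset (Fin q)) = 1 := by
  unfold sgn; simp

lemma rB_bF_empty (j : Fin q) : rB j (bF (∅ : Finset (Fin q))) = bF {j} := by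
  rw [rB, par_bF, Finset.card_empty, pow_zero, one_smul,
    wB_bF j ∅ (Finset.notMem_empty j), iB_bF_not_mem j ∅ (Finset.notMem_empty j),
    sgn_empty, one_smul, add_zero]
  rfl

lemma sgn_singleton_lt {j k : Fin q} (hjk : j < k) : sgn k ({j} : Finset (Fin q)) = -1 := by
  unfold sgn
  rw [Finset.filter_singleton, if_pos hjk, Finset.card_singleton, pow_one]

lemma rB_bF_singleton {j k : Fin q} (hjk : j < k) :
    rB k (bF ({j} : Finset (Fin q))) = bF {j, k} := by
  have hkj : k ∉ ({j} : Finset (Fin q)) := by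
    simp only [Finset.mem_singleton]
    exact hjk.ne'
  rw [rB, par_bF, Finset.card_singleton, pow_one,
    wB_smul, iB_smul, wB_bF k {j} hkj, iB_bF_not_mem k {j} hkj,
    sgn_singleton_lt hjk]
  have : insert k ({j} : Finset (Fin q)) = {j, k} := by
    exact Finset.pair_comm k j
  rw [this]
  funext u; simp

lemma bF_pair {j k : Fin q} (hjk : j < k) :
    bF ({j, k} : Finset (Fin q)) = rB k (rB j (bF ∅)) := by
  rw [rB_bF_empty, rB_bF_singleton hjk]

lemma clM_bF_left (a : Finset (Fin q)) (ω : Ext q) : clM (bF a) ω = clB a ω := by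
  unfold clM
  rw [Finset.sum_eq_single a (fun b _ hb => by
      simp only [bF, if_neg hb, zero_smul])
    (fun h => absurd (Finset.mem_univ a) h)]
  simp [bF]

lemma clM_bF_pair_right {j k : Fin q} (hjk : j < k) (ω : Ext q) :
    clM ω (bF ({j, k} : Finset (Fin q))) = rB k (rB j ω) := by
  unfold clM
  rw [bF_pair hjk]
  have : ∀ t : Finset (Fin q), clB t (rB k (rB j (bF ∅))) = rB k (rB j (bF t)) := by
    intro t
    rw [clB_rB, clB_rB, clB_bF_empty]
  simp only [this]
  calc (∑ t : Finset (Fin q), ω t • rB k (rB j (bF t)))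
      = ∑ t : Finset (Fin q), rB k (rB j (ω t • bF t)) := by
        simp_rw [rB_smul]
    _ = rB k (rB j ω) := by rw [← rB_sum, ← rB_sum, sum_bF]
lemma wM_bF_singleton (m : Fin q) (ψ : Ext q) : wM (bF {m}) ψ = wB m ψ := by
  unfold wM
  rw [Finset.sum_eq_single {m} (fun b _ hb => by simp only [bF, if_neg hb, zero_smul])
    (fun h => absurd (Finset.mem_univ {m}) h)]
  simp only [bF, if_pos rfl, one_smul, wBs, Finset.sort_singleton, List.foldr_cons,
    List.foldr_nil]
  simp

lemma wM_smul_left (c : ℝ) (φ ψ : Ext q) : wM (c • φ) ψ = c • wM φ ψ := by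
  unfold wM
  rw [Finset.smul_sum]
  refine Finset.sum_congr rfl fun s _ => ?_
  rw [Pi.smul_apply, smul_eq_mul, smul_smul]

lemma wM_zero_left (ψ : Ext q) : wM 0 ψ = 0 := by
  simp [wM]

lemma rhs_pair {j k : Fin q} (hjk : j < k) (ω : Ext q) :
    (∑ i : Fin q, wM (iB i (bF ({j, k} : Finset (Fin q)))) (iB i ω))
      = wB k (iB j ω) - wB j (iB k ω) := by
  have hne : j ≠ k := hjk.ne
  have hjmem : j ∈ ({j, k} : Finset (Fin q)) := Finset.mem_insert_self _ _
  have hkmem : k ∈ ({j, k} : Finset (Fin q)) := by simp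
  have herasej : ({j, k} : Finset (Fin q)).erase j = {k} :=
    Finset.erase_insert (by simp [hne])
  have herasek : ({j, k} : Finset (Fin q)).erase k = {j} := by
    rw [Finset.erase_insert_of_ne hne, Finset.erase_singleton]
    rfl
  have hsgnj : sgn j ({j, k} : Finset (Fin q)) = 1 := by
    unfold sgn
    rw [Finset.filter_eq_empty_iff.2 ?_, Finset.card_empty, pow_zero]
    intro b hb
    rcases Finset.mem_insert.1 hb with rfl | hb
    · exact lt_irrefl b
    · rw [Finset.mem_singleton] at hb
      subst hb
      exact asymm hjk
  have hsgnk : sgn k ({j, k} : Finset (Fin q)) = -1 := by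
    unfold sgn
    have : Finset.filter (fun m => m < k) ({j, k} : Finset (Fin q)) = {j} := by
      rw [Finset.filter_insert, if_pos hjk, Finset.filter_singleton,
        if_neg (lt_irrefl k)]
      rfl
    rw [this, Finset.card_singleton, pow_one]
  rw [← Finset.sum_subset (Finset.subset_univ ({j, k} : Finset (Fin q)))
    (fun i _ hi => by rw [iB_bF_not_mem i _ hi, wM_zero_left])]
  rw [Finset.sum_pair hne, iB_bF_mem j _ hjmem, iB_bF_mem k _ hkmem,
    herasej, herasek, hsgnj, hsgnk, one_smul, wM_smul_left,
    wM_bF_singleton, wM_bF_singleton, neg_one_smul]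
  abel

lemma op_pair {j k : Fin q} (hne : j ≠ k) (ω : Ext q) :
    (wB j (wB k ω - iB k ω) - iB j (wB k ω - iB k ω)) - rB k (rB j ω)
      = (2 : ℝ) • (wB k (iB j ω) - wB j (iB k ω)) := by
  have hpar : par (rB j ω) = -(wB j ω) - iB j ω := by
    rw [rB, par_add, par_wB, par_iB, par_par]
    abel
  have hrk : rB k (rB j ω)
      = -(wB k (wB j ω)) - wB k (iB j ω) - iB k (wB j ω) - iB k (iB j ω) := by
    rw [rB, hpar]
    have h1 : (-(wB j ω) - iB j ω : Ext q)
        = ((-1 : ℝ) • wB j ω) + ((-1 : ℝ) • iB j ω) := by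
      funext s; simp; ring
    rw [h1, wB_add, iB_add, wB_smul, wB_smul, iB_smul, iB_smul]
    funext s; simp; ring
  rw [wB_sub, iB_sub, hrk]
  have c1 : wB j (wB k ω) = -(wB k (wB j ω)) := wB_wB j k ω
  have c2 : iB j (iB k ω) = -(iB k (iB j ω)) := iB_iB j k ω
  have c3 : wB j (iB k ω) + iB k (wB j ω) = 0 := by rw [wB_iB, if_neg hne]
  have c4 : wB k (iB j ω) + iB j (wB k ω) = 0 := by rw [wB_iB, if_neg hne.symm]
  linear_combination (norm := (funext s; simp; ring_nf)) c1 + c2 + c3 - c4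

lemma pair_extract (a : Finset (Fin q)) (h : a.card = 2) :
    ∃ j k : Fin q, j < k ∧ a = {j, k} ∧ Finset.sort a (· ≤ ·) = [j, k] := by
  have hlen : (Finset.sort a (· ≤ ·)).length = 2 := by rw [Finset.length_sort, h]
  obtain ⟨j, k, hL⟩ := List.length_eq_two.1 hlen
  have hsorted := (Finset.sortedLT_sort a).pairwise
  rw [hL] at hsorted
  have hjk : j < k := by
    simp only [List.pairwise_cons, List.mem_singleton] at hsorted
    exact hsorted.1 k rfl
  refine ⟨j, k, hjk, ?_, hL⟩
  have := Finset.sort_toFinset a (· ≤ ·)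
  rw [hL] at this
  rw [← this]
  simp

lemma pair_main {j k : Fin q} (hjk : j < k)
    (hsort : Finset.sort ({j, k} : Finset (Fin q)) (· ≤ ·) = [j, k]) (ω : Ext q) :
    brkt (bF ({j, k} : Finset (Fin q))) ω
      = (2 : ℝ) • (∑ i : Fin q, wM (iB i (bF ({j, k} : Finset (Fin q)))) (iB i ω)) := by
  rw [brkt, clM_bF_left, clM_bF_pair_right hjk, rhs_pair hjk,
    clB_eq_foldr, hsort]
  simp only [List.foldr_cons, List.foldr_nil]
  exact op_pair hjk.ne ω
-- clB linearity
lemma clB_add (t : Finset (Fin q)) (ω φ : Ext q) :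
    clB t (ω + φ) = clB t ω + clB t φ := by
  rw [clB_eq_foldr, clB_eq_foldr, clB_eq_foldr]
  induction Finset.sort t (· ≤ ·) with
  | nil => rfl
  | cons a L ih =>
    simp only [List.foldr_cons, ih, wB_add, iB_add]
    abel

lemma clB_smul (t : Finset (Fin q)) (c : ℝ) (ω : Ext q) :
    clB t (c • ω) = c • clB t ω := by
  rw [clB_eq_foldr, clB_eq_foldr]
  induction Finset.sort t (· ≤ ·) with
  | nil => rfl
  | cons a L ih =>
    simp only [List.foldr_cons, ih, wB_smul, iB_smul, smul_sub]

lemma clB_sum {α : Type*} (t : Finset (Fin q)) (u : Finset α) (f : α → Ext q) :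
    clB t (∑ a ∈ u, f a) = ∑ a ∈ u, clB t (f a) :=
  map_sum (AddMonoidHom.mk' (clB t) (clB_add t)) f u

lemma clM_right_expand (ω Ψ : Ext q) :
    clM ω Ψ = ∑ a : Finset (Fin q), Ψ a • clM ω (bF a) := by
  unfold clM
  conv_lhs =>
    rw [show Ψ = ∑ a : Finset (Fin q), Ψ a • bF a from (sum_bF Ψ).symm]
  simp_rw [clB_sum, clB_smul, Finset.smul_sum]
  rw [Finset.sum_comm]
  refine Finset.sum_congr rfl fun a _ => ?_
  refine Finset.sum_congr rfl fun s _ => ?_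
  rw [smul_comm]

lemma clM_left_expand (Ψ ω : Ext q) :
    clM Ψ ω = ∑ a : Finset (Fin q), Ψ a • clM (bF a) ω := by
  simp_rw [clM_bF_left]
  rfl

lemma brkt_expand (Ψ ω : Ext q) :
    brkt Ψ ω = ∑ a : Finset (Fin q), Ψ a • brkt (bF a) ω := by
  unfold brkt
  rw [clM_left_expand, clM_right_expand, ← Finset.sum_sub_distrib]
  refine Finset.sum_congr rfl fun a _ => ?_
  rw [smul_sub]

-- wM linearity in first argument
lemma wM_add_left (φ₁ φ₂ ψ : Ext q) : wM (φ₁ + φ₂) ψ = wM φ₁ ψ + wM φ₂ ψ := by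
  unfold wM
  rw [← Finset.sum_add_distrib]
  refine Finset.sum_congr rfl fun s _ => ?_
  rw [Pi.add_apply, add_smul]

lemma wM_sum_left {α : Type*} (u : Finset α) (f : α → Ext q) (ψ : Ext q) :
    wM (∑ a ∈ u, f a) ψ = ∑ a ∈ u, wM (f a) ψ :=
  map_sum (AddMonoidHom.mk' (fun φ => wM φ ψ) (fun a b => wM_add_left a b ψ)) f u

lemma iB_sum {α : Type*} (i : Fin q) (u : Finset α) (f : α → Ext q) :
    iB i (∑ a ∈ u, f a) = ∑ a ∈ u, iB i (f a) :=
  map_sum (AddMonoidHom.mk' (iB i) (iB_add i)) f u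

/-- The main equality. -/
lemma main_eq (Ψ ω : Ext q) (hΨ : homog 2 Ψ) :
    brkt Ψ ω = (2 : ℝ) • (∑ i : Fin q, wM (iB i Ψ) (iB i ω)) := by
  have hrhs : ∀ i : Fin q,
      wM (iB i Ψ) (iB i ω) = ∑ a : Finset (Fin q), Ψ a • wM (iB i (bF a)) (iB i ω) := by
    intro i
    conv_lhs =>
      rw [show Ψ = ∑ a : Finset (Fin q), Ψ a • bF a from (sum_bF Ψ).symm]
    rw [iB_sum, wM_sum_left]
    refine Finset.sum_congr rfl fun a _ => ?_
    rw [iB_smul, wM_smul_left]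
  calc brkt Ψ ω = ∑ a : Finset (Fin q), Ψ a • brkt (bF a) ω := brkt_expand Ψ ω
    _ = ∑ a : Finset (Fin q),
          Ψ a • ((2:ℝ) • ∑ i : Fin q, wM (iB i (bF a)) (iB i ω)) := by
        refine Finset.sum_congr rfl fun a _ => ?_
        by_cases hz : Ψ a = 0
        · rw [hz, zero_smul, zero_smul]
        · have hcard : a.card = 2 := by
            by_contra hc
            exact hz (hΨ a hc)
          obtain ⟨j, k, hjk, rfl, hsort⟩ := pair_extract a hcard
          rw [pair_main hjk hsort]
    _ = (2:ℝ) • ∑ i : Fin q, wM (iB i Ψ) (iB i ω) := by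
        simp_rw [hrhs, Finset.smul_sum]
        rw [Finset.sum_comm]
        refine Finset.sum_congr rfl fun i _ => ?_
        refine Finset.sum_congr rfl fun a _ => ?_
        rw [smul_comm]
-- homogeneity lemmas
lemma homog_smul {p : ℕ} (c : ℝ) {ω : Ext q} (h : homog p ω) : homog p (c • ω) := by
  intro s hs
  rw [Pi.smul_apply, h s hs, smul_zero]

lemma homog_sum {p : ℕ} {α : Type*} (u : Finset α) (f : α → Ext q)
    (h : ∀ a ∈ u, homog p (f a)) : homog p (∑ a ∈ u, f a) := by
  intro s hs
  rw [Finset.sum_apply]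
  exact Finset.sum_eq_zero fun a ha => h a ha s hs

lemma homog_wB {n : ℕ} (i : Fin q) {ψ : Ext q} (h : homog n ψ) :
    homog (n + 1) (wB i ψ) := by
  intro s hs
  unfold wB
  split
  · next hi =>
    rw [h (s.erase i) ?_, mul_zero]
    intro hc
    rw [← Finset.card_erase_add_one hi, hc] at hs
    exact hs rfl
  · rfl

lemma homog_wBs_foldr {n : ℕ} (L : List (Fin q)) {ψ : Ext q} (h : homog n ψ) :
    homog (n + L.length) (L.foldr (fun i τ => wB i τ) ψ) := by
  induction L with
  | nil => simpa using h
  | cons a L ih =>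
    rw [List.foldr_cons, List.length_cons, ← Nat.add_assoc]
    exact homog_wB a ih

lemma homog_wBs {n : ℕ} (t : Finset (Fin q)) {ψ : Ext q} (h : homog n ψ) :
    homog (n + t.card) (wBs t ψ) := by
  rw [wBs, ← Finset.length_sort (α := Fin q) (s := t) (· ≤ ·)]
  exact homog_wBs_foldr _ h

lemma homog_wM {m n : ℕ} {φ ψ : Ext q} (hφ : homog m φ) (hψ : homog n ψ) :
    homog (m + n) (wM φ ψ) := by
  intro s hs
  unfold wM
  rw [Finset.sum_apply]
  refine Finset.sum_eq_zero fun t _ => ?_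
  by_cases ht : t.card = m
  · rw [Pi.smul_apply, homog_wBs t hψ s (by rw [ht]; omega), smul_zero]
  · rw [Pi.smul_apply, hφ t ht, zero_smul]

lemma homog_iB {m : ℕ} (i : Fin q) {ω : Ext q} (h : homog (m + 1) ω) :
    homog m (iB i ω) := by
  intro s hs
  unfold iB
  split
  · rfl
  · next hi =>
    rw [h (insert i s) ?_, mul_zero]
    rw [Finset.card_insert_of_notMem hi]
    omega

lemma iB_of_homog_zero (i : Fin q) {ω : Ext q} (h : homog 0 ω) : iB i ω = 0 := by
  funext s
  unfold iB
  split
  · rfl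
  · next hi =>
    rw [h (insert i s) (by simp [Finset.card_insert_of_notMem hi]), mul_zero]
    rfl

lemma wB_zero (i : Fin q) : wB i (0 : Ext q) = 0 := by
  funext s; unfold wB; split <;> simp

lemma wM_zero_right (φ : Ext q) : wM φ 0 = 0 := by
  have hwBs : ∀ t : Finset (Fin q), wBs t (0 : Ext q) = 0 := by
    intro t
    rw [wBs]
    induction Finset.sort t (· ≤ ·) with
    | nil => rfl
    | cons a L ih => rw [List.foldr_cons, ih, wB_zero]
  unfold wM
  simp [hwBs]


/-- Lemma 3.1 of the paper. For a 2-form `Ψ` and a `p`-form `ω`,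
`[Ψ, ω] = 2 Σ_{i=1}^q (e_i ⌟ Ψ) ∧ (e_i ⌟ ω)`; in particular `[Ψ, ω]` has degree `p`. -/
theorem statement_0 {q p : ℕ} (hq : 1 ≤ q) (Ψ ω : Ext q)
    (hΨ : homog 2 Ψ) (hω : homog p ω) :
    (brkt Ψ ω = (2 : ℝ) • (∑ i : Fin q, wM (iB i Ψ) (iB i ω))) ∧
      homog p (brkt Ψ ω) := by
  have heq := main_eq Ψ ω hΨ
  refine ⟨heq, ?_⟩
  rw [heq]
  cases p with
  | zero =>
    refine homog_smul _ (homog_sum _ _ fun i _ => ?_)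
    rw [iB_of_homog_zero i hω, wM_zero_right]
    intro s _; rfl
  | succ n =>
    refine homog_smul _ (homog_sum _ _ fun i _ => ?_)
    have h1 : homog 1 (iB i Ψ) := homog_iB i hΨ
    have h2 : homog n (iB i ω) := homog_iB i hω
    have := homog_wM h1 h2
    rwa [show 1 + n = n + 1 by omega] at this


end
end Paper
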